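/- Let E be an effect algebra and S ⊆ E. If S ∪ {1} admits a compatibility support mapping, then S is coexistent: there exist a Boolean algebra B and an observable α : B → E such that S is contained in the range of α. -/

import Mathlib

universe u

/-- An effect algebra: a partial commutative, associative operation `add`
(modelled as an `Option`-valued total operation), with constants `zero`, `one`,
unique orthosupplements, and `a ⊕ 1` defined only for `a = 0`. -/
structure EffectAlgebra (α : Type u) where
  add : α → α → Option α
  zero : α
  one : α
  add_comm : ∀ a b : α, add a b = add b a
  add_assoc : ∀ a b c ab abc : α, add a b = some ab → add ab c = some abc →
    ∃ bc : α, add b c = some bc ∧ add a bc = some abc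
  orthosupp : ∀ a : α, ∃! a' : α, add a a' = some one
  add_one : ∀ a b : α, add a one = some b → a = zero

namespace EffectAlgebra

variable {α : Type u}

/-- The induced order: `a ≤ b` iff `∃ c, a ⊕ c = b`. -/
def le (E : EffectAlgebra α) (a b : α) : Prop := ∃ c, E.add a c = some b

/-- The orthosupplement `a'`. -/
noncomputable def compl (E : EffectAlgebra α) (a : α) : α :=
  (E.orthosupp a).exists.choose

open Classical in
/-- The partial difference `b ⊖ a` (junk value `0` when `a ≤ b` fails). -/
noncomputable def sub (E : EffectAlgebra α) (b a : α) : α :=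
  if h : ∃ c, E.add a c = some b then h.choose else E.zero

/-- Iterated partial sum of a list of elements. -/
noncomputable def osum (E : EffectAlgebra α) : List α → Option α
  | [] => some E.zero
  | a :: l => (E.osum l).bind fun s => E.add a s

end EffectAlgebra

namespace EffectAlgebra

variable {α : Type u}

/-- `f` is a compatibility support mapping for `S` (with `1 ∈ S`). -/
def IsCSM [DecidableEq α] (E : EffectAlgebra α) (S : Set α) (f : Finset α → Finset α → α) : Prop :=
  E.one ∈ S ∧
  (∀ U V₁ V₂ : Finset α, ↑U ⊆ S → ↑V₁ ⊆ S → ↑V₂ ⊆ S → V₁ ⊆ V₂ →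
    E.le (f U V₁) (f U V₂)) ∧
  (∀ U V : Finset α, ↑U ⊆ S → ↑V ⊆ S → E.le (f U V) (f U {E.one})) ∧
  (∀ U : Finset α, ↑U ⊆ S → f U ∅ = E.zero) ∧
  (∀ c ∈ S, f ∅ {c} = c) ∧
  (∀ (U V : Finset α) (c : α), ↑U ⊆ S → ↑V ⊆ S → c ∈ S → c ∉ U → c ∉ V →
    E.sub (f (insert c U) {E.one}) (f (insert c U) V) =
      E.sub (f U (insert c V)) (f U V))

/-- `f` is a strong compatibility support mapping for `S`:
condition (e*) holds with no restriction on `c`. -/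
def IsStrongCSM [DecidableEq α] (E : EffectAlgebra α) (S : Set α) (f : Finset α → Finset α → α) : Prop :=
  E.one ∈ S ∧
  (∀ U V₁ V₂ : Finset α, ↑U ⊆ S → ↑V₁ ⊆ S → ↑V₂ ⊆ S → V₁ ⊆ V₂ →
    E.le (f U V₁) (f U V₂)) ∧
  (∀ U V : Finset α, ↑U ⊆ S → ↑V ⊆ S → E.le (f U V) (f U {E.one})) ∧
  (∀ U : Finset α, ↑U ⊆ S → f U ∅ = E.zero) ∧
  (∀ c ∈ S, f ∅ {c} = c) ∧
  (∀ (U V : Finset α) (c : α), ↑U ⊆ S → ↑V ⊆ S → c ∈ S →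
    E.sub (f (insert c U) {E.one}) (f (insert c U) V) =
      E.sub (f U (insert c V)) (f U V))

/-- `D(X,A) = ⟨X|{1}⟩ ⊖ ⟨X|A∖X⟩`. -/
noncomputable def Dmap [DecidableEq α] (E : EffectAlgebra α)
    (f : Finset α → Finset α → α) (X A : Finset α) : α :=
  E.sub (f X {E.one}) (f X (A \ X))

end EffectAlgebra

namespace EffectAlgebra

/-- An observable: a map from a Boolean algebra to an effect algebra preserving
`0`, `1` and sending disjoint joins to orthogonal sums. -/
def IsObservable {α : Type u} (E : EffectAlgebra α) {B : Type u}
    [BooleanAlgebra B] (g : B → α) : Prop :=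
  g ⊥ = E.zero ∧ g ⊤ = E.one ∧
    ∀ x y : B, x ⊓ y = ⊥ → E.add (g x) (g y) = some (g (x ⊔ y))

end EffectAlgebra

/- ------------------------------------------------------------------
   Auxiliary development
   ------------------------------------------------------------------ -/

namespace CSMAux

open EffectAlgebra
open scoped Classical

variable {α : Type u}

lemma one_add_zero (E : EffectAlgebra α) : E.add E.one E.zero = some E.one := by
  obtain ⟨x, hx, -⟩ := E.orthosupp E.one
  have hx0 : x = E.zero := E.add_one x E.one ((E.add_comm x E.one).trans hx)
  rw [← hx0]; exact hx

lemma zero_add (E : EffectAlgebra α) (a : α) : E.add E.zero a = some a := by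
  have aux : ∀ x x' : α, E.add x x' = some E.one → E.add E.zero x' = some x' := by
    intro x x' hx
    obtain ⟨bc, hbc, h2⟩ := E.add_assoc x x' E.zero E.one E.one hx (one_add_zero E)
    obtain ⟨y, hy, hu⟩ := E.orthosupp x
    have hbx : bc = x' := (hu bc h2).trans (hu x' hx).symm
    rw [hbx] at hbc
    rw [E.add_comm]; exact hbc
  obtain ⟨a', ha', -⟩ := E.orthosupp a
  exact aux a' a ((E.add_comm a' a).trans ha')

lemma add_zero' (E : EffectAlgebra α) (a : α) : E.add a E.zero = some a := by
  rw [E.add_comm]; exact zero_add E a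

lemma cancel (E : EffectAlgebra α) {a b c d : α} (hb : E.add a b = some d)
    (hc : E.add a c = some d) : b = c := by
  obtain ⟨d', hd', -⟩ := E.orthosupp d
  obtain ⟨e, he, h1⟩ := E.add_assoc a b d' d E.one hb hd'
  obtain ⟨e', he', h1'⟩ := E.add_assoc a c d' d E.one hc hd'
  obtain ⟨x, hx, hu⟩ := E.orthosupp a
  have hee : e' = e := (hu e' h1').trans (hu e h1).symm
  rw [hee] at he'
  obtain ⟨u, hu1, hb1⟩ := E.add_assoc b d' a e E.one he ((E.add_comm e a).trans h1)
  obtain ⟨u', hu1', hc1⟩ := E.add_assoc c d' a e E.one he' ((E.add_comm e a).trans h1)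
  have huu : u' = u := by rw [hu1] at hu1'; exact (Option.some_inj.mp hu1').symm
  rw [huu] at hc1
  obtain ⟨y, hy, hyu⟩ := E.orthosupp u
  exact (hyu b ((E.add_comm u b).trans hb1)).trans (hyu c ((E.add_comm u c).trans hc1)).symm

lemma sub_eq (E : EffectAlgebra α) {a b c : α} (h : E.add a c = some b) : E.sub b a = c := by
  have hex : ∃ x, E.add a x = some b := ⟨c, h⟩
  rw [EffectAlgebra.sub, dif_pos hex]
  exact cancel E hex.choose_spec h

lemma add_sub (E : EffectAlgebra α) {a b : α} (h : E.le a b) :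
    E.add a (E.sub b a) = some b := by
  have h' : ∃ c, E.add a c = some b := h
  rw [EffectAlgebra.sub, dif_pos h']; exact h'.choose_spec

lemma sub_zero' (E : EffectAlgebra α) (a : α) : E.sub a E.zero = a :=
  sub_eq E (zero_add E a)

lemma sub_add_sub (E : EffectAlgebra α) {a b c : α} (hab : E.le a b) (hbc : E.le b c) :
    E.add (E.sub c b) (E.sub b a) = some (E.sub c a) := by
  have h1 := add_sub E hab
  have h2 := add_sub E hbc
  obtain ⟨z, hz, h3⟩ := E.add_assoc a (E.sub b a) (E.sub c b) b c h1 h2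
  rw [sub_eq E h3]
  rw [E.add_comm]; exact hz

lemma option_ext {β : Type*} {x y : Option β} (h : ∀ t : β, x = some t ↔ y = some t) :
    x = y := by
  cases x with
  | none =>
    cases y with
    | none => rfl
    | some t => exact absurd ((h t).mpr rfl) (by simp)
  | some t => exact ((h t).mp rfl).symm

lemma bind_add_assoc (E : EffectAlgebra α) (a b c : α) :
    ((E.add a b).bind fun x => E.add x c) = ((E.add b c).bind fun y => E.add a y) := by
  apply option_ext
  intro t
  constructor
  · intro h
    obtain ⟨ab, hab, habc⟩ : ∃ ab, E.add a b = some ab ∧ E.add ab c = some t := by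
      cases hx : E.add a b with
      | none => rw [hx] at h; simp at h
      | some ab => rw [hx] at h; exact ⟨ab, rfl, h⟩
    obtain ⟨bc, hbc, h2⟩ := E.add_assoc a b c ab t hab habc
    rw [hbc]; exact h2
  · intro h
    obtain ⟨bc, hbc, habc⟩ : ∃ bc, E.add b c = some bc ∧ E.add a bc = some t := by
      cases hx : E.add b c with
      | none => rw [hx] at h; simp at h
      | some bc => rw [hx] at h; exact ⟨bc, rfl, h⟩
    obtain ⟨ba, hba, h2⟩ := E.add_assoc c b a bc t ((E.add_comm c b).trans hbc)
      ((E.add_comm bc a).trans habc)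
    rw [(E.add_comm a b).trans hba]
    exact (E.add_comm ba c).trans h2

/-- Totalized addition on `Option α`. -/
def oadd (E : EffectAlgebra α) (x y : Option α) : Option α :=
  x.bind fun a => y.bind fun b => E.add a b

lemma oadd_some (E : EffectAlgebra α) (a b : α) :
    oadd E (some a) (some b) = E.add a b := rfl

lemma oadd_none_left (E : EffectAlgebra α) (y : Option α) : oadd E none y = none := rfl

lemma oadd_none_right (E : EffectAlgebra α) (x : Option α) : oadd E x none = none := by
  cases x <;> rfl

lemma oadd_comm (E : EffectAlgebra α) (x y : Option α) : oadd E x y = oadd E y x := by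
  cases x with
  | none => rw [oadd_none_left, oadd_none_right]
  | some a =>
    cases y with
    | none => rw [oadd_none_left, oadd_none_right]
    | some b => rw [oadd_some, oadd_some, E.add_comm]

lemma oadd_assoc (E : EffectAlgebra α) (x y z : Option α) :
    oadd E (oadd E x y) z = oadd E x (oadd E y z) := by
  cases x with
  | none => rw [oadd_none_left, oadd_none_left, oadd_none_left]
  | some a =>
    cases y with
    | none =>
      rw [oadd_none_right, oadd_none_left, oadd_none_right]
    | some b =>
      cases z with
      | none => rw [oadd_none_right, oadd_none_right, oadd_none_right]
      | some c => exact bind_add_assoc E a b c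

/-- The commutative monoid of partial sums. -/
def M (E : EffectAlgebra α) : CommMonoid (Option α) where
  mul := oadd E
  one := some E.zero
  mul_assoc := oadd_assoc E
  one_mul x := by
    cases x with
    | none => exact oadd_none_right E _
    | some a => exact zero_add E a
  mul_one x := by
    cases x with
    | none => exact oadd_none_left E _
    | some a => exact add_zero' E a
  mul_comm := oadd_comm E

/-- Partial sum of `g` over a finite set, valued in `Option α`. -/
noncomputable def fsum {β : Type*} (E : EffectAlgebra α) (s : Finset β) (g : β → α) :
    Option α :=
  @Finset.prod β (Option α) (M E) s fun b => some (g b)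

section fsum

variable {β : Type*} (E : EffectAlgebra α)

lemma fsum_empty (g : β → α) : fsum E (∅ : Finset β) g = some E.zero := by
  letI := M E
  unfold fsum
  exact Finset.prod_empty

lemma fsum_singleton (g : β → α) (x : β) : fsum E ({x} : Finset β) g = some (g x) := by
  letI := M E
  unfold fsum
  exact Finset.prod_singleton (fun b => some (g b)) x

lemma fsum_union [DecidableEq β] {s t : Finset β} (h : Disjoint s t) (g : β → α) :
    fsum E (s ∪ t) g = oadd E (fsum E s g) (fsum E t g) := by
  letI := M E
  unfold fsum
  exact Finset.prod_union h

lemma fsum_image [DecidableEq β] {s : Finset β} {i : β → β}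
    (h : ∀ x ∈ s, ∀ y ∈ s, i x = i y → x = y) (g : β → α) :
    fsum E (s.image i) g = fsum E s (fun x => g (i x)) := by
  letI := M E
  unfold fsum
  exact Finset.prod_image h

lemma fsum_add {s : Finset β} {g g' k : β → α}
    (h : ∀ x ∈ s, E.add (g x) (g' x) = some (k x)) :
    oadd E (fsum E s g) (fsum E s g') = fsum E s k := by
  letI := M E
  show (∏ x ∈ s, some (g x)) * (∏ x ∈ s, some (g' x)) = fsum E s k
  rw [← Finset.prod_mul_distrib]
  exact Finset.prod_congr rfl fun x hx => h x hx

lemma fsum_sub_defined [DecidableEq β] {s t : Finset β} {g : β → α} {v : α}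
    (hsub : s ⊆ t) (h : fsum E t g = some v) : ∃ u, fsum E s g = some u := by
  have ht : t = s ∪ (t \ s) := (Finset.union_sdiff_of_subset hsub).symm
  rw [ht, fsum_union E Finset.disjoint_sdiff] at h
  cases hx : fsum E s g with
  | none => rw [hx, oadd_none_left] at h; exact absurd h (by simp)
  | some u => exact ⟨u, rfl⟩

end fsum

section CSM

variable [DecidableEq α] (E : EffectAlgebra α) (S : Set α) (f : Finset α → Finset α → α)

/-- The key splitting identity for `Dmap`. -/
lemma dmap_split (hf : E.IsCSM S f) {A X : Finset α} {c : α} (hA : ↑A ⊆ S) (hX : X ⊆ A)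
    (hc : c ∈ S) (hcA : c ∉ A) :
    E.add (Dmap E f X (insert c A)) (Dmap E f (insert c X) (insert c A)) =
      some (Dmap E f X A) := by
  obtain ⟨h1, ha, hb, hz, hd, he⟩ := hf
  have hXS : ↑X ⊆ S := fun x hx => hA (hX hx)
  have hVS : ↑(A \ X) ⊆ S := fun x hx => by
    simp only [Finset.coe_sdiff, Set.mem_diff] at hx
    exact hA hx.1
  have hcX : c ∉ X := fun h => hcA (hX h)
  have hcV : c ∉ A \ X := fun h => hcA (Finset.mem_sdiff.mp h).1
  have hcVS : ↑(insert c (A \ X)) ⊆ S := by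
    rw [Finset.coe_insert]
    exact Set.insert_subset_iff.mpr ⟨hc, hVS⟩
  have e1 : insert c A \ X = insert c (A \ X) := Finset.insert_sdiff_of_notMem A hcX
  have e2 : insert c A \ insert c X = A \ X := by
    rw [Finset.insert_sdiff_insert, Finset.sdiff_insert_of_notMem hcA]
  have hab : E.le (f X (A \ X)) (f X (insert c (A \ X))) :=
    ha X (A \ X) (insert c (A \ X)) hXS hVS hcVS (Finset.subset_insert _ _)
  have hbt : E.le (f X (insert c (A \ X))) (f X {E.one}) := hb X _ hXS hcVS
  have key := sub_add_sub E hab hbt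
  have he' := he X (A \ X) c hXS hVS hc hcX hcV
  unfold EffectAlgebra.Dmap
  rw [e1, e2, he']
  exact key

lemma dmap_empty (hf : E.IsCSM S f) : Dmap E f ∅ ∅ = E.one := by
  obtain ⟨h1, -, -, hz, hd, -⟩ := hf
  unfold EffectAlgebra.Dmap
  rw [Finset.sdiff_self, hz ∅ (by simp), sub_zero', hd E.one h1]

lemma dmap_single (hf : E.IsCSM S f) {a : α} (haS : a ∈ S) : Dmap E f {a} {a} = a := by
  obtain ⟨h1, -, -, hz, hd, he⟩ := hf
  have he' := he ∅ ∅ a (by simp) (by simp) haS (Finset.notMem_empty a) (Finset.notMem_empty a)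
  rw [LawfulSingleton.insert_empty_eq] at he'
  rw [hz {a} (by simpa using haS), hz ∅ (by simp), hd a haS, sub_zero', sub_zero'] at he'
  unfold EffectAlgebra.Dmap
  rw [Finset.sdiff_self, hz {a} (by simpa using haS), sub_zero', he']

lemma fsum_powerset (hf : E.IsCSM S f) :
    ∀ A Y : Finset α, Disjoint Y A → ↑A ⊆ S → ↑Y ⊆ S →
      fsum E A.powerset (fun X => Dmap E f (Y ∪ X) (Y ∪ A)) = some (Dmap E f Y Y) := by
  intro A
  induction A using Finset.induction_on with
  | empty =>
    intro Y _ _ _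
    rw [Finset.powerset_empty, fsum_singleton]
    rw [Finset.union_empty]
  | @insert c A hcA ih =>
    intro Y hdisj hA hY
    have hcS : c ∈ S := hA (by simp)
    have hAS : ↑A ⊆ S := fun x hx => hA (by simp; right; exact hx)
    have hcY : c ∉ Y := fun h => (Finset.disjoint_left.mp hdisj h) (Finset.mem_insert_self c A)
    have hdisj' : Disjoint Y A := hdisj.mono_right (Finset.subset_insert c A)
    have hdisjPow : Disjoint A.powerset (A.powerset.image (insert c)) := by
      rw [Finset.disjoint_left]
      intro X hX hX'
      obtain ⟨X₀, hX₀, rfl⟩ := Finset.mem_image.mp hX'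
      exact hcA (Finset.mem_powerset.mp hX (Finset.mem_insert_self c X₀))
    have hinj : ∀ X ∈ A.powerset, ∀ X' ∈ A.powerset, insert c X = insert c X' → X = X' := by
      intro X hX X' hX' h
      have h1 : c ∉ X := fun hcx => hcA (Finset.mem_powerset.mp hX hcx)
      have h2 : c ∉ X' := fun hcx => hcA (Finset.mem_powerset.mp hX' hcx)
      rw [← Finset.erase_insert h1, ← Finset.erase_insert h2, h]
    have hpoint : ∀ X ∈ A.powerset,
        E.add (Dmap E f (Y ∪ X) (Y ∪ insert c A))
            (Dmap E f (Y ∪ insert c X) (Y ∪ insert c A))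
          = some (Dmap E f (Y ∪ X) (Y ∪ A)) := by
      intro X hXp
      have hX : X ⊆ A := Finset.mem_powerset.mp hXp
      rw [Finset.union_insert, Finset.union_insert]
      refine dmap_split E S f hf ?_ ?_ hcS ?_
      · rw [Finset.coe_union]
        exact Set.union_subset hY hAS
      · exact Finset.union_subset_union_right hX
      · intro h
        rcases Finset.mem_union.mp h with h | h
        · exact hcY h
        · exact hcA h
    rw [Finset.powerset_insert, fsum_union E hdisjPow, fsum_image E hinj]
    rw [fsum_add E hpoint]
    exact ih Y hdisj' hAS hY

lemma fsum_powerset_one (hf : E.IsCSM S f) {A : Finset α} (hA : ↑A ⊆ S) :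
    fsum E A.powerset (fun X => Dmap E f X A) = some E.one := by
  have h := fsum_powerset E S f hf A ∅ (Finset.disjoint_empty_left A) hA (by simp)
  simp only [Finset.empty_union] at h
  rw [dmap_empty E S f hf] at h
  exact h

end CSM

/-- `b` is determined by the (finitely many) coordinates in `A`. -/
def DetBy (A : Finset α) (b : Set (Set α)) : Prop :=
  ∀ ω ω' : Set α, (∀ a ∈ A, (a ∈ ω ↔ a ∈ ω')) → ω ∈ b → ω' ∈ b

lemma DetBy.mono {A A' : Finset α} {b : Set (Set α)} (h : A ⊆ A') (hd : DetBy A b) :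
    DetBy A' b :=
  fun ω ω' hag => hd ω ω' fun a haA => hag a (h haA)

open Classical in
/-- The subsets of `A` whose "cylinder" lies in `b`. -/
noncomputable def Tset [DecidableEq α] (A : Finset α) (b : Set (Set α)) :
    Finset (Finset α) :=
  A.powerset.filter (fun X => (↑X : Set α) ∈ b)

section evalOn

variable [DecidableEq α] (E : EffectAlgebra α) (S : Set α) (f : Finset α → Finset α → α)

/-- The value of the observable on the event `b`, computed via coordinates `A`. -/
noncomputable def evalOn (A : Finset α) (b : Set (Set α)) : α :=
  (fsum E (Tset A b) (fun X => Dmap E f X A)).getD E.zero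

lemma evalOn_spec (hf : E.IsCSM S f) {A : Finset α} (hA : ↑A ⊆ S) (b : Set (Set α)) :
    fsum E (Tset A b) (fun X => Dmap E f X A) = some (evalOn E f A b) := by
  have hsub : Tset A b ⊆ A.powerset := Finset.filter_subset (fun X : Finset α => (↑X : Set α) ∈ b) A.powerset
  obtain ⟨u, hu⟩ := fsum_sub_defined E hsub (fsum_powerset_one E S f hf hA)
  rw [evalOn, hu]
  rfl

lemma evalOn_insert (hf : E.IsCSM S f) {A : Finset α} {c : α} {b : Set (Set α)}
    (hA : ↑A ⊆ S) (hcS : c ∈ S) (hcA : c ∉ A) (hdet : DetBy A b) :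
    evalOn E f (insert c A) b = evalOn E f A b := by
  have hcoe : ↑(insert c A) ⊆ S := by
    rw [Finset.coe_insert]; exact Set.insert_subset_iff.mpr ⟨hcS, hA⟩
  have hTset : Tset (insert c A) b = Tset A b ∪ (Tset A b).image (insert c) := by
    ext X
    simp only [Tset, Finset.mem_filter, Finset.mem_powerset, Finset.mem_union, Finset.mem_image]
    constructor
    · rintro ⟨hXsub, hXb⟩
      by_cases hcX : c ∈ X
      · right
        refine ⟨X.erase c, ⟨⟨?_, ?_⟩, Finset.insert_erase hcX⟩⟩
        · intro x hx
          rcases Finset.mem_insert.mp (hXsub (Finset.mem_of_mem_erase hx)) with h | h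
          · exact absurd h (Finset.ne_of_mem_erase hx)
          · exact h
        · refine hdet ↑X ↑(X.erase c) ?_ hXb
          intro a haA
          have hac : a ≠ c := fun h => hcA (h ▸ haA)
          simp [Finset.mem_erase, hac]
      · left
        refine ⟨fun x hx => ?_, hXb⟩
        rcases Finset.mem_insert.mp (hXsub hx) with h | h
        · exact absurd (h ▸ hx) hcX
        · exact h
    · rintro (⟨hXsub, hXb⟩ | ⟨X₀, ⟨hX₀sub, hX₀b⟩, rfl⟩)
      · exact ⟨hXsub.trans (Finset.subset_insert c A), hXb⟩
      · refine ⟨Finset.insert_subset_insert c hX₀sub, ?_⟩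
        refine hdet ↑X₀ ↑(insert c X₀) ?_ hX₀b
        intro a haA
        have hac : a ≠ c := fun h => hcA (h ▸ haA)
        simp [Finset.mem_insert, hac]
  have hdisj : Disjoint (Tset A b) ((Tset A b).image (insert c)) := by
    rw [Finset.disjoint_left]
    intro X hX hX'
    obtain ⟨X₀, hX₀, rfl⟩ := Finset.mem_image.mp hX'
    have : X₀ ⊆ A := Finset.mem_powerset.mp (Finset.mem_of_mem_filter X₀ hX₀)
    exact hcA (Finset.mem_powerset.mp (Finset.mem_of_mem_filter _ hX)
      (Finset.mem_insert_self c X₀))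
  have hinj : ∀ X ∈ Tset A b, ∀ X' ∈ Tset A b, insert c X = insert c X' → X = X' := by
    intro X hX X' hX' h
    have h1 : c ∉ X := fun hcx =>
      hcA (Finset.mem_powerset.mp (Finset.mem_of_mem_filter _ hX) hcx)
    have h2 : c ∉ X' := fun hcx =>
      hcA (Finset.mem_powerset.mp (Finset.mem_of_mem_filter _ hX') hcx)
    rw [← Finset.erase_insert h1, ← Finset.erase_insert h2, h]
  have hpoint : ∀ X ∈ Tset A b,
      E.add (Dmap E f X (insert c A)) (Dmap E f (insert c X) (insert c A))
        = some (Dmap E f X A) := by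
    intro X hX
    exact dmap_split E S f hf hA
      (Finset.mem_powerset.mp (Finset.mem_of_mem_filter _ hX)) hcS hcA
  have h1 := evalOn_spec E S f hf hcoe b
  have h2 := evalOn_spec E S f hf hA b
  rw [hTset, fsum_union E hdisj, fsum_image E hinj, fsum_add E hpoint, h2] at h1
  exact (Option.some_inj.mp h1).symm

lemma evalOn_union (hf : E.IsCSM S f) {A : Finset α} {b : Set (Set α)}
    (hA : ↑A ⊆ S) (hdet : DetBy A b) :
    ∀ C : Finset α, ↑C ⊆ S → evalOn E f (A ∪ C) b = evalOn E f A b := by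
  intro C
  induction C using Finset.induction_on with
  | empty => intro _; rw [Finset.union_empty]
  | @insert c C hc ih =>
    intro hCS
    have hcS : c ∈ S := hCS (by simp)
    have hCS' : ↑C ⊆ S := fun x hx => hCS (by simp; right; exact hx)
    rw [Finset.union_insert]
    by_cases hmem : c ∈ A ∪ C
    · rw [Finset.insert_eq_self.mpr hmem]; exact ih hCS'
    · have hAC : ↑(A ∪ C) ⊆ S := by
        rw [Finset.coe_union]; exact Set.union_subset hA hCS'
      rw [evalOn_insert E S f hf hAC hcS hmem (hdet.mono Finset.subset_union_left)]
      exact ih hCS'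

lemma evalOn_eq (hf : E.IsCSM S f) {A A' : Finset α} {b : Set (Set α)}
    (hA : ↑A ⊆ S) (hA' : ↑A' ⊆ S) (hdet : DetBy A b) (hdet' : DetBy A' b) :
    evalOn E f A b = evalOn E f A' b := by
  have h1 := evalOn_union E S f hf hA hdet A' hA'
  have h2 := evalOn_union E S f hf hA' hdet' A hA
  rw [← h1, Finset.union_comm, h2]

lemma evalOn_bot (A : Finset α) : evalOn E f A (∅ : Set (Set α)) = E.zero := by
  have hT : Tset A (∅ : Set (Set α)) = ∅ := by
    simp [Tset, Finset.filter_false_of_mem]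
  rw [evalOn, hT, fsum_empty]
  rfl

lemma evalOn_top (hf : E.IsCSM S f) {A : Finset α} (hA : ↑A ⊆ S) :
    evalOn E f A (Set.univ : Set (Set α)) = E.one := by
  have hT : Tset A (Set.univ : Set (Set α)) = A.powerset := by
    simp [Tset]
  rw [evalOn, hT, fsum_powerset_one E S f hf hA]
  rfl

lemma evalOn_add (hf : E.IsCSM S f) {A : Finset α} (hA : ↑A ⊆ S) {b₁ b₂ : Set (Set α)}
    (hdisj : b₁ ∩ b₂ = ∅) :
    E.add (evalOn E f A b₁) (evalOn E f A b₂) = some (evalOn E f A (b₁ ∪ b₂)) := by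
  have hT : Tset A (b₁ ∪ b₂) = Tset A b₁ ∪ Tset A b₂ := by
    ext X
    simp only [Tset, Finset.mem_filter, Finset.mem_union, Set.mem_union]
    tauto
  have hTd : Disjoint (Tset A b₁) (Tset A b₂) := by
    rw [Finset.disjoint_left]
    intro X h1 h2
    have hx : (↑X : Set α) ∈ b₁ ∩ b₂ := by
      constructor
      · exact (Finset.mem_filter.mp h1).2
      · exact (Finset.mem_filter.mp h2).2
    rw [hdisj] at hx
    exact hx
  have h1 := evalOn_spec E S f hf hA b₁
  have h2 := evalOn_spec E S f hf hA b₂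
  have h12 := evalOn_spec E S f hf hA (b₁ ∪ b₂)
  rw [hT, fsum_union E hTd, h1, h2, oadd_some] at h12
  exact h12

lemma evalOn_singleton (hf : E.IsCSM S f) {a : α} (haS : a ∈ S) :
    evalOn E f {a} {ω : Set α | a ∈ ω} = a := by
  have hT : Tset {a} {ω : Set α | a ∈ ω} = {({a} : Finset α)} := by
    ext X
    simp only [Tset, Finset.mem_filter, Finset.mem_powerset, Finset.mem_singleton,
      Finset.subset_singleton_iff, Set.mem_setOf_eq, Finset.mem_coe]
    constructor
    · rintro ⟨h | rfl, h2⟩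
      · exact absurd h2 (by simp [h])
      · rfl
    · rintro rfl
      exact ⟨Or.inr rfl, by simp⟩
  rw [evalOn, hT, fsum_singleton, dmap_single E S f hf haS]
  rfl

end evalOn

/-- The property of being determined by finitely many coordinates from `S`. -/
def Dets (S : Set α) (b : Set (Set α)) : Prop :=
  ∃ A : Finset α, ↑A ⊆ S ∧ DetBy A b

/-- The Boolean algebra of events determined by finitely many coordinates from `S`. -/
def EventSpace (S : Set α) : Type u := {b : Set (Set α) // Dets S b}

namespace EventSpace

variable [DecidableEq α] {S : Set α}

lemma dets_union {b b' : Set (Set α)} (h : Dets S b) (h' : Dets S b') :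
    Dets S (b ∪ b') := by
  obtain ⟨A, hA, hd⟩ := h
  obtain ⟨A', hA', hd'⟩ := h'
  refine ⟨A ∪ A', by rw [Finset.coe_union]; exact Set.union_subset hA hA', ?_⟩
  intro ω ω' hag hm
  rcases hm with hm | hm
  · exact Or.inl ((hd.mono Finset.subset_union_left) ω ω' hag hm)
  · exact Or.inr ((hd'.mono Finset.subset_union_right) ω ω' hag hm)

lemma dets_inter {b b' : Set (Set α)} (h : Dets S b) (h' : Dets S b') :
    Dets S (b ∩ b') := by
  obtain ⟨A, hA, hd⟩ := h
  obtain ⟨A', hA', hd'⟩ := h'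
  refine ⟨A ∪ A', by rw [Finset.coe_union]; exact Set.union_subset hA hA', ?_⟩
  intro ω ω' hag hm
  exact ⟨(hd.mono Finset.subset_union_left) ω ω' hag hm.1,
    (hd'.mono Finset.subset_union_right) ω ω' hag hm.2⟩

lemma dets_compl {b : Set (Set α)} (h : Dets S b) : Dets S bᶜ := by
  obtain ⟨A, hA, hd⟩ := h
  refine ⟨A, hA, ?_⟩
  intro ω ω' hag hm hmem
  exact hm (hd ω' ω (fun a haA => (hag a haA).symm) hmem)

lemma dets_bot : Dets S (∅ : Set (Set α)) :=
  ⟨∅, by simp, fun ω ω' _ hm => absurd hm (Set.notMem_empty ω)⟩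

lemma dets_top : Dets S (Set.univ : Set (Set α)) :=
  ⟨∅, by simp, fun ω ω' _ _ => Set.mem_univ ω'⟩

instance : Max (EventSpace S) := ⟨fun x y => ⟨x.1 ∪ y.1, dets_union x.2 y.2⟩⟩
instance : Min (EventSpace S) := ⟨fun x y => ⟨x.1 ∩ y.1, dets_inter x.2 y.2⟩⟩
instance : Top (EventSpace S) := ⟨⟨Set.univ, dets_top⟩⟩
instance : Bot (EventSpace S) := ⟨⟨∅, dets_bot⟩⟩
instance : Compl (EventSpace S) := ⟨fun x => ⟨x.1ᶜ, dets_compl x.2⟩⟩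
instance : SDiff (EventSpace S) :=
  ⟨fun x y => ⟨x.1 \ y.1, by rw [Set.diff_eq]; exact dets_inter x.2 (dets_compl y.2)⟩⟩
noncomputable instance : HImp (EventSpace S) :=
  ⟨fun x y => ⟨x.1 ⇨ y.1, by
    rw [himp_eq]
    exact dets_union y.2 (dets_compl x.2)⟩⟩

instance : LE (EventSpace S) := ⟨fun x y => x.1 ≤ y.1⟩
instance : LT (EventSpace S) := ⟨fun x y => x.1 < y.1⟩

noncomputable instance : BooleanAlgebra (EventSpace S) :=
  Function.Injective.booleanAlgebra (fun b : EventSpace S => b.1) Subtype.val_injective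
    Iff.rfl Iff.rfl
    (fun _ _ => rfl) (fun _ _ => rfl) rfl rfl (fun _ => rfl) (fun _ _ => rfl)
    (fun _ _ => rfl)

end EventSpace

end CSMAux

/-- If `S ∪ {1}` admits a compatibility support mapping, then `S` is
coexistent: it is contained in the range of an observable defined on some
Boolean algebra. -/
theorem coexistent_of_csm {α : Type u} [DecidableEq α] (E : EffectAlgebra α)
    (S : Set α) (f : Finset α → Finset α → α)
    (hf : E.IsCSM (S ∪ {E.one}) f) :
    ∃ (B : Type u) (inst : BooleanAlgebra B) (g : B → α),
      @EffectAlgebra.IsObservable α E B inst g ∧ S ⊆ Set.range g := by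
  classical
  open CSMAux in
  set S₀ : Set α := S ∪ {E.one} with hS₀
  -- the observable
  refine ⟨EventSpace S₀, inferInstance, fun b => evalOn E f b.2.choose b.1, ⟨?_, ?_, ?_⟩, ?_⟩
  · -- bottom
    exact evalOn_bot E f _
  · -- top
    exact evalOn_top E S₀ f hf (⊤ : EventSpace S₀).2.choose_spec.1
  · -- additivity
    intro x y hxy
    have gspec : ∀ (b : EventSpace S₀) (A : Finset α), ↑A ⊆ S₀ → DetBy A b.1 →
        evalOn E f b.2.choose b.1 = evalOn E f A b.1 := fun b A hA hdet =>
      evalOn_eq E S₀ f hf b.2.choose_spec.1 hA b.2.choose_spec.2 hdet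
    set A : Finset α := x.2.choose ∪ y.2.choose ∪ (x ⊔ y).2.choose with hA
    have hAS : ↑A ⊆ S₀ := by
      rw [hA, Finset.coe_union, Finset.coe_union]
      exact Set.union_subset
        (Set.union_subset x.2.choose_spec.1 y.2.choose_spec.1)
        (x ⊔ y).2.choose_spec.1
    have hx' : DetBy A x.1 := x.2.choose_spec.2.mono
      ((Finset.subset_union_left).trans Finset.subset_union_left)
    have hy' : DetBy A y.1 := y.2.choose_spec.2.mono
      ((Finset.subset_union_right).trans Finset.subset_union_left)
    have hxy' : DetBy A (x ⊔ y).1 := (x ⊔ y).2.choose_spec.2.mono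
      Finset.subset_union_right
    show E.add (evalOn E f x.2.choose x.1) (evalOn E f y.2.choose y.1)
        = some (evalOn E f (x ⊔ y).2.choose (x ⊔ y).1)
    rw [gspec x A hAS hx', gspec y A hAS hy', gspec (x ⊔ y) A hAS hxy']
    have hdisj : x.1 ∩ y.1 = ∅ := congrArg Subtype.val hxy
    have hsup : (x ⊔ y).1 = x.1 ∪ y.1 := rfl
    rw [hsup]
    exact evalOn_add E S₀ f hf hAS hdisj
  · -- range
    intro a haS
    have haS₀ : a ∈ S₀ := Or.inl haS
    have hdet : DetBy ({a} : Finset α) {ω : Set α | a ∈ ω} := by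
      intro ω ω' hag hm
      exact (hag a (Finset.mem_singleton_self a)).mp hm
    have hsub : ↑({a} : Finset α) ⊆ S₀ := by simpa using haS₀
    set b : EventSpace S₀ := ⟨{ω : Set α | a ∈ ω}, ⟨{a}, hsub, hdet⟩⟩ with hb
    refine ⟨b, ?_⟩
    show evalOn E f b.2.choose b.1 = a
    rw [evalOn_eq E S₀ f hf b.2.choose_spec.1 hsub b.2.choose_spec.2 hdet]
    exact evalOn_singleton E S₀ f hf haS₀
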